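/- Let M₀, M₁, M_t, M∞ ∈ GL₂(ℂ) with M₀M₁M_tM∞ = I. Suppose M₀ = diag(e^{πiα₀}, e^{−πiα₀}) with e^{2πiα₀} ≠ 1, M_t = (−1)^{θ−1}I for an integer θ, tr M₁ = e^{πiα₁} + e^{−πiα₁}, tr M∞ = e^{πiα∞} + e^{−πiα∞}, det M₁ = 1, and α₀ + α₁ + α∞ = k − 3 for an integer k with θ ≡ k (mod 2). Then writing M₁ = [[a,b],[c,d]], we have a = e^{πiα₁}, d = e^{−πiα₁}, and bc = 0. -/

import Mathlib

theorem stmt14 (θ : ℕ) (hθ : 2 ≤ θ) (k : ℤ) (hpar : (θ : ℤ) % 2 = k % 2)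
    (α₀ α₁ αinf : ℝ) (hα : α₀ + α₁ + αinf = (k : ℝ) - 3)
    (M₀ M₁ Mt Minf : Matrix (Fin 2) (Fin 2) ℂ)
    (hprod : M₀ * M₁ * Mt * Minf = 1)
    (hM₀ : M₀ = Matrix.diagonal
      ![Complex.exp ((Real.pi : ℂ) * Complex.I * (α₀ : ℂ)),
        Complex.exp (-((Real.pi : ℂ) * Complex.I * (α₀ : ℂ)))])
    (hα₀ : Complex.exp (2 * (Real.pi : ℂ) * Complex.I * (α₀ : ℂ)) ≠ 1)
    (hMt : Mt = ((-1 : ℂ) ^ (θ - 1)) • (1 : Matrix (Fin 2) (Fin 2) ℂ))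
    (htr1 : Matrix.trace M₁ =
      Complex.exp ((Real.pi : ℂ) * Complex.I * (α₁ : ℂ)) +
        Complex.exp (-((Real.pi : ℂ) * Complex.I * (α₁ : ℂ))))
    (htrinf : Matrix.trace Minf =
      Complex.exp ((Real.pi : ℂ) * Complex.I * (αinf : ℂ)) +
        Complex.exp (-((Real.pi : ℂ) * Complex.I * (αinf : ℂ))))
    (hdet1 : M₁.det = 1) (hdetinf : Minf.det = 1) :
    M₁ 0 0 = Complex.exp ((Real.pi : ℂ) * Complex.I * (α₁ : ℂ)) ∧
    M₁ 1 1 = Complex.exp (-((Real.pi : ℂ) * Complex.I * (α₁ : ℂ))) ∧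
    M₁ 0 1 * M₁ 1 0 = 0 := by
  classical
  set E0 : ℂ := Complex.exp ((Real.pi : ℂ) * Complex.I * (α₀ : ℂ)) with hE0
  set E1 : ℂ := Complex.exp ((Real.pi : ℂ) * Complex.I * (α₁ : ℂ)) with hE1
  set Ei : ℂ := Complex.exp ((Real.pi : ℂ) * Complex.I * (αinf : ℂ)) with hEi
  have hE0ne : E0 ≠ 0 := Complex.exp_ne_zero _
  have hE1ne : E1 ≠ 0 := Complex.exp_ne_zero _
  set s : ℂ := (-1 : ℂ) ^ (θ - 1) with hs
  have hs2 : s * s = 1 := by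
    rw [hs, ← pow_add]; exact Even.neg_one_pow ⟨θ - 1, rfl⟩
  set w : ℂ := (-1 : ℂ) ^ (k - 3) with hw
  have hw2 : w * w = 1 := by
    rw [hw, ← zpow_add₀ (by norm_num : (-1 : ℂ) ≠ 0)]
    exact Even.neg_one_zpow ⟨k - 3, rfl⟩
  have hwinv : w⁻¹ = w := inv_eq_of_mul_eq_one_right hw2
  have hsw : s = w := by
    rw [hs, hw, ← zpow_natCast (-1 : ℂ) (θ - 1),
      show ((θ - 1 : ℕ) : ℤ) = (θ : ℤ) - 1 by omega]
    rcases Int.even_or_odd ((θ : ℤ) - 1) with h | h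
    · have h' : Even (k - 3) := by rw [Int.even_iff] at h ⊢; omega
      rw [Even.neg_one_zpow h, Even.neg_one_zpow h']
    · have h' : Odd (k - 3) := by rw [Int.odd_iff] at h ⊢; omega
      rw [Odd.neg_one_zpow h, Odd.neg_one_zpow h']
  have hexp0 : Complex.exp (-((Real.pi : ℂ) * Complex.I * (α₀ : ℂ))) = E0⁻¹ := by
    rw [Complex.exp_neg]
  have hexp1 : Complex.exp (-((Real.pi : ℂ) * Complex.I * (α₁ : ℂ))) = E1⁻¹ := by
    rw [Complex.exp_neg]
  have hexpi : Complex.exp (-((Real.pi : ℂ) * Complex.I * (αinf : ℂ))) = Ei⁻¹ := by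
    rw [Complex.exp_neg]
  have eq1 : M₁ 0 0 + M₁ 1 1 = E1 + E1⁻¹ := by
    rw [← Matrix.trace_fin_two M₁, htr1, hexp1]
  have hdet0 : M₀.det = 1 := by
    rw [hM₀, Matrix.det_diagonal, Fin.prod_univ_two]
    simp only [Matrix.cons_val_zero, Matrix.cons_val_one, Matrix.head_cons]
    rw [← Complex.exp_add]
    simp
  have hdP : (M₀ * M₁).det = 1 := by rw [Matrix.det_mul, hdet0, hdet1, one_mul]
  have hstep : s • (M₀ * M₁ * Minf) = 1 := by
    rw [hMt] at hprod
    rw [Matrix.mul_smul, Matrix.mul_one, Matrix.smul_mul] at hprod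
    exact hprod
  have hPN : (M₀ * M₁) * Minf = s • 1 := by
    have h2 := congrArg (fun X => s • X) hstep
    simp only [smul_smul, hs2, one_smul] at h2
    exact h2
  have hMinf : Minf = s • (M₀ * M₁).adjugate := by
    calc Minf = ((M₀ * M₁).det • (1 : Matrix (Fin 2) (Fin 2) ℂ)) * Minf := by
          rw [hdP, one_smul, one_mul]
      _ = ((M₀ * M₁).adjugate * (M₀ * M₁)) * Minf := by rw [Matrix.adjugate_mul]
      _ = (M₀ * M₁).adjugate * ((M₀ * M₁) * Minf) := by rw [Matrix.mul_assoc]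
      _ = (M₀ * M₁).adjugate * (s • 1) := by rw [hPN]
      _ = s • (M₀ * M₁).adjugate := by rw [Matrix.mul_smul, Matrix.mul_one]
  have htradj : (M₀ * M₁).adjugate.trace = (M₀ * M₁).trace := by
    rw [Matrix.adjugate_fin_two]
    simp [Matrix.trace_fin_two]
    ring
  have htrP : (M₀ * M₁).trace = E0 * M₁ 0 0 + E0⁻¹ * M₁ 1 1 := by
    rw [Matrix.trace_fin_two, hM₀]
    simp [Matrix.mul_apply, Fin.sum_univ_two, Matrix.diagonal, Complex.exp_neg]
    exact Or.inl hE0.symm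
  have eq2 : s * (E0 * M₁ 0 0 + E0⁻¹ * M₁ 1 1) = Ei + Ei⁻¹ := by
    rw [hexpi] at htrinf
    rw [← htrP, ← htrinf, hMinf, Matrix.trace_smul, htradj, smul_eq_mul]
  have hai : (αinf : ℝ) = ((k : ℝ) - 3) - α₀ - α₁ := by linarith
  have eq3 : Ei = w * (E0⁻¹ * E1⁻¹) := by
    have h1 : (Real.pi : ℂ) * Complex.I * (αinf : ℂ) =
        ((k - 3 : ℤ) : ℂ) * ((Real.pi : ℂ) * Complex.I) +
          (-((Real.pi : ℂ) * Complex.I * (α₀ : ℂ))) +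
          (-((Real.pi : ℂ) * Complex.I * (α₁ : ℂ))) := by
      have h2 : (αinf : ℂ) = ((k : ℂ) - 3) - (α₀ : ℂ) - (α₁ : ℂ) := by
        rw [hai]; push_cast; ring
      rw [h2]; push_cast; ring
    rw [hEi, h1, Complex.exp_add, Complex.exp_add, Complex.exp_int_mul,
      Complex.exp_pi_mul_I, hexp0, hexp1, hw]
    ring
  have eq5 : E0 * E0 ≠ 1 := by
    intro h
    apply hα₀
    rw [show 2 * (Real.pi : ℂ) * Complex.I * (α₀ : ℂ) =
      (Real.pi : ℂ) * Complex.I * (α₀ : ℂ) + (Real.pi : ℂ) * Complex.I * (α₀ : ℂ) by ring,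
      Complex.exp_add, ← hE0]
    exact h
  have hXinv : (E0⁻¹ * E1⁻¹)⁻¹ = E0 * E1 := by rw [mul_inv, inv_inv, inv_inv]
  have eqA : E0 * M₁ 0 0 + E0⁻¹ * M₁ 1 1 = E0 * E1 + E0⁻¹ * E1⁻¹ := by
    calc E0 * M₁ 0 0 + E0⁻¹ * M₁ 1 1
        = s * (s * (E0 * M₁ 0 0 + E0⁻¹ * M₁ 1 1)) := by rw [← mul_assoc, hs2, one_mul]
      _ = s * (Ei + Ei⁻¹) := by rw [eq2]
      _ = w * (w * (E0⁻¹ * E1⁻¹) + (w * (E0⁻¹ * E1⁻¹))⁻¹) := by rw [hsw, eq3]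
      _ = w * (w * (E0⁻¹ * E1⁻¹) + w * (E0 * E1)) := by rw [mul_inv, hwinv, hXinv]
      _ = (w * w) * (E0⁻¹ * E1⁻¹ + E0 * E1) := by ring
      _ = E0 * E1 + E0⁻¹ * E1⁻¹ := by rw [hw2]; ring
  have hkey : (E0 * E0 - 1) * (M₁ 0 0 - E1) = 0 := by
    have h3 : (E0 * E0 - 1) * (M₁ 0 0 - E1) =
        E0 * (E0 * M₁ 0 0 + E0⁻¹ * M₁ 1 1) - (M₁ 0 0 + M₁ 1 1) -
          (E0 * (E0 * E1 + E0⁻¹ * E1⁻¹) - (E1 + E1⁻¹)) := by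
      field_simp
      ring
    rw [h3, eqA, eq1]
    ring
  have ha : M₁ 0 0 = E1 := by
    rcases mul_eq_zero.mp hkey with h | h
    · exact absurd (sub_eq_zero.mp h) eq5
    · exact sub_eq_zero.mp h
  have hd : M₁ 1 1 = E1⁻¹ := by
    rw [ha] at eq1
    linear_combination eq1
  have hbc : M₁ 0 1 * M₁ 1 0 = 0 := by
    rw [Matrix.det_fin_two, ha, hd, mul_inv_cancel₀ hE1ne] at hdet1
    linear_combination -hdet1
  refine ⟨ha, ?_, hbc⟩
  rw [hexp1]
  exact hd
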